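/- Let p be an odd prime, m ≥ 1, and let b be a unit of ℤ/p^mℤ. Then | Σ_{x ∈ ℤ/p^mℤ} η(x) · exp(2πi b x / p^m) | ≤ p^{m/2}, where η(x) denotes the Legendre symbol (x mod p / p) (so η(x) = 0 when p divides x). -/

import Mathlib

/-- The canonical additive character of `ℤ/qℤ`: `c ↦ exp(2πi·c̃/q)` where `c̃` is the
canonical integer representative of `c`. -/
noncomputable def eZMod (q : ℕ) (c : ZMod q) : ℂ :=
  Complex.exp (2 * Real.pi * Complex.I * c.val / q)

lemma eZMod_eq_stdAddChar {q : ℕ} [NeZero q] (c : ZMod q) :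
    eZMod q c = ZMod.stdAddChar c := by
  rw [ZMod.stdAddChar_apply, ZMod.toCircle_apply]; rfl


lemma gauss_sum_m1 (p : ℕ) [Fact p.Prime] (hodd : Odd p) (N : ℕ) [NeZero N] (hN : N = p)
    (b : ZMod N) (hb : IsUnit b) :
    ‖(∑ x : ZMod N, (legendreSym p (x.val) : ℂ) * eZMod N (b * x))‖
      ≤ Real.sqrt p := by
  subst N
  have hp : p.Prime := Fact.out
  haveI : Fact (1 < p) := ⟨hp.one_lt⟩
  have hp2 : p ≠ 2 := by rintro rfl; exact (by decide : ¬ Odd 2) hodd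
  set χ : MulChar (ZMod p) ℂ :=
    (quadraticChar (ZMod p)).ringHomComp (Int.castRingHom ℂ) with hχ
  set ψ : AddChar (ZMod p) ℂ := ZMod.stdAddChar with hψ
  have hχ1 : χ ≠ 1 :=
    (MulChar.ringHomComp_ne_one_iff (RingHom.injective_int _)).mpr
      (quadraticChar_ne_one (by rw [ZMod.ringChar_zmod_n]; exact hp2))
  have hχ2 : χ.IsQuadratic := (quadraticChar_isQuadratic (ZMod p)).comp _
  have habs1 : ∀ a : ZMod p, a ≠ 0 → ‖χ a‖ = 1 := by
    intro a ha
    rcases quadraticChar_dichotomy ha with h | h <;>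
      simp [hχ, MulChar.ringHomComp_apply, h]
  have hsum : (∑ x : ZMod p, (legendreSym p (x.val) : ℂ) * eZMod p (b * x))
      = gaussSum χ (ψ.mulShift b) := by
    refine Finset.sum_congr rfl fun x _ => ?_
    rw [AddChar.mulShift_apply, ← eZMod_eq_stdAddChar]
    congr 2
    have hx : ((x.val : ℤ) : ZMod p) = x := by
      push_cast
      rw [ZMod.natCast_val, ZMod.cast_id]
    unfold legendreSym
    rw [hx]
  have hb0 : b ≠ 0 := hb.ne_zero
  have hgs : ‖gaussSum χ ψ‖ = Real.sqrt p := by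
    have hsq := gaussSum_sq hχ1 hχ2 (ZMod.isPrimitive_stdAddChar p)
    have : ‖gaussSum χ ψ‖ ^ 2 = p := by
      rw [← norm_pow, hsq, norm_mul, habs1 (-1)
        (neg_ne_zero.mpr (one_ne_zero : (1 : ZMod p) ≠ 0)), one_mul,
        ZMod.card, Complex.norm_natCast]
    rw [← this, Real.sqrt_sq (norm_nonneg _)]
  have hmul := gaussSum_mulShift χ ψ hb.unit
  rw [hb.unit_spec] at hmul
  have habs : ‖gaussSum χ (ψ.mulShift b)‖ = Real.sqrt p := by
    have := congrArg (‖·‖) hmul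
    rwa [norm_mul, habs1 b hb0, one_mul, hgs] at this
  rw [hsum, habs]

/-- **Generalized Gauss sum bound.** Let `p` be an odd prime, `m ≥ 1`, and `b` a unit
of `ℤ/p^mℤ`. Then `|Σ_{x ∈ ℤ/p^mℤ} η(x)·exp(2πi·bx/p^m)| ≤ p^{m/2}`, where `η(x)` is
the Legendre symbol of `x mod p`. -/
theorem twisted_gauss_sum_bound (p m : ℕ) [Fact p.Prime] (hodd : Odd p) (hm : 1 ≤ m)
    (b : ZMod (p ^ m)) (hb : IsUnit b) :
    ‖(∑ x : ZMod (p ^ m),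
        (legendreSym p (x.val) : ℂ) * eZMod (p ^ m) (b * x))‖ ≤
      (p : ℝ) ^ ((m : ℝ) / 2) := by
  have hp : p.Prime := Fact.out
  haveI : NeZero (p ^ m) := ⟨pow_ne_zero _ hp.ne_zero⟩
  rcases eq_or_lt_of_le hm with h1 | h2
  · -- case m = 1 : classical Gauss sum
    subst h1
    refine le_trans (gauss_sum_m1 p hodd (p ^ 1) (pow_one p) b hb) ?_
    rw [Real.sqrt_eq_rpow]
    exact Real.rpow_le_rpow_of_exponent_le (by exact_mod_cast hp.one_le) (by norm_num)
  · -- case m ≥ 2 : the sum vanishes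
    have hu : ∀ x : ZMod (p ^ m),
        (legendreSym p ((x + (p : ZMod (p ^ m)) ^ (m - 1)).val) : ℂ) =
          legendreSym p (x.val) := by
      have hcast : ∀ x : ZMod (p ^ m), ((ZMod.val x : ℤ) : ZMod p) =
          ZMod.castHom (dvd_pow_self p (Nat.one_le_iff_ne_zero.mp hm)) (ZMod p) x := by
        intro x; push_cast; rw [ZMod.natCast_val, ZMod.castHom_apply]
      intro x
      unfold legendreSym
      congr 1
      rw [hcast, hcast, map_add, map_pow, map_natCast, ZMod.natCast_self,
        zero_pow (by omega : m - 1 ≠ 0), add_zero]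
    have hωne : eZMod (p ^ m) (b * (p : ZMod (p ^ m)) ^ (m - 1)) ≠ 1 := by
      intro h
      rw [eZMod_eq_stdAddChar] at h
      have h0 : b * (p : ZMod (p ^ m)) ^ (m - 1) = 0 :=
        ZMod.injective_stdAddChar (h.trans (AddChar.map_zero_eq_one _).symm)
      have hu0 : ((p : ZMod (p ^ m)) : ZMod (p ^ m)) ^ (m - 1) = 0 :=
        (IsUnit.mul_right_eq_zero hb).mp h0
      rw [← Nat.cast_pow, ZMod.natCast_eq_zero_iff] at hu0
      have := (Nat.pow_dvd_pow_iff_le_right hp.one_lt).mp hu0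
      omega
    have hS0 : (∑ x : ZMod (p ^ m), (legendreSym p (x.val) : ℂ) * eZMod (p ^ m) (b * x)) = 0 := by
      have hshift : (∑ x : ZMod (p ^ m), (legendreSym p (x.val) : ℂ) * eZMod (p ^ m) (b * x))
          = eZMod (p ^ m) (b * (p : ZMod (p ^ m)) ^ (m - 1)) *
            ∑ x : ZMod (p ^ m), (legendreSym p (x.val) : ℂ) * eZMod (p ^ m) (b * x) := by
        rw [Finset.mul_sum]
        rw [← Equiv.sum_comp (Equiv.addRight ((p : ZMod (p ^ m)) ^ (m - 1)))
          (fun x => (legendreSym p (x.val) : ℂ) * eZMod (p ^ m) (b * x))]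
        refine Finset.sum_congr rfl fun x _ => ?_
        simp only [Equiv.coe_addRight]
        rw [hu, mul_add, eZMod_eq_stdAddChar (b * x + _), eZMod_eq_stdAddChar,
          eZMod_eq_stdAddChar, AddChar.map_add_eq_mul]
        ring
      by_contra hne
      refine hωne (mul_right_cancel₀ hne ?_)
      rw [one_mul, ← hshift]
    rw [hS0, norm_zero]
    positivity
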